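/- The first derivative of W_M with respect to x is strictly positive at every x ∈ [0,ρ]; in particular W_M is strictly increasing on [0,ρ]. -/

import Mathlib

/-- Gated mean low-priority waiting time, as a function of the
high-priority occupation rate `x`, with total occupation rate `ρ`
and deterministic vacation length `S`. -/
noncomputable def WG (ρ S x : ℝ) : ℝ :=
  (1 + ρ + x) * (S / (2 * (1 - ρ)) + ρ / (1 - ρ ^ 2))

/-- Mixed gated/exhaustive mean low-priority waiting time, as a function
of the high-priority occupation rate `x`. -/
noncomputable def WM (ρ S x : ℝ) : ℝ :=
  ρ / ((1 - ρ) * (1 - x)) + S * (1 + ρ * (1 - 2 * x)) / (2 * (1 - ρ) * (1 - x))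

lemma hasDerivAt_WM (ρ S x : ℝ) (hρ1 : ρ < 1) (hx : x < 1) :
    HasDerivAt (WM ρ S) (ρ / ((1 - ρ) * (1 - x) ^ 2) + S / (2 * (1 - x) ^ 2)) x := by
  have hρ : (1 : ℝ) - ρ ≠ 0 := by linarith
  have hx' : (1 : ℝ) - x ≠ 0 := by linarith
  have hden1 : HasDerivAt (fun y : ℝ => (1 - ρ) * (1 - y)) (-(1 - ρ)) x := by
    simpa using ((hasDerivAt_id x).const_sub 1).const_mul (1 - ρ)
  have hden2 : HasDerivAt (fun y : ℝ => 2 * (1 - ρ) * (1 - y)) (-(2 * (1 - ρ))) x := by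
    simpa using ((hasDerivAt_id x).const_sub 1).const_mul (2 * (1 - ρ))
  have hnum2 : HasDerivAt (fun y : ℝ => S * (1 + ρ * (1 - 2 * y))) (S * (ρ * (-2))) x := by
    have : HasDerivAt (fun y : ℝ => 1 - 2 * y) (-2) x := by
      simpa using ((hasDerivAt_id x).const_mul 2).const_sub 1
    simpa using ((this.const_mul ρ).const_add 1).const_mul S
  have h1 : HasDerivAt (fun y : ℝ => ρ / ((1 - ρ) * (1 - y)))
      ((0 * ((1 - ρ) * (1 - x)) - ρ * (-(1 - ρ))) / ((1 - ρ) * (1 - x)) ^ 2) x :=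
    (hasDerivAt_const x ρ).div hden1 (by positivity)
  have h2 : HasDerivAt (fun y : ℝ => S * (1 + ρ * (1 - 2 * y)) / (2 * (1 - ρ) * (1 - y)))
      ((S * (ρ * (-2)) * (2 * (1 - ρ) * (1 - x)) -
        S * (1 + ρ * (1 - 2 * x)) * (-(2 * (1 - ρ)))) / (2 * (1 - ρ) * (1 - x)) ^ 2) x :=
    hnum2.div hden2 (by positivity)
  have h := h1.add h2
  refine h.congr_deriv ?_
  field_simp
  ring

theorem deriv_WM_pos (ρ S : ℝ) (hρ0 : 0 < ρ) (hρ1 : ρ < 1) (hS : 0 < S) :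
    (∀ x ∈ Set.Icc (0 : ℝ) ρ, 0 < deriv (WM ρ S) x) ∧
    StrictMonoOn (WM ρ S) (Set.Icc (0 : ℝ) ρ) := by
  have key : ∀ x ∈ Set.Icc (0 : ℝ) ρ, 0 < deriv (WM ρ S) x := by
    intro x hx
    have hx1 : x < 1 := lt_of_le_of_lt hx.2 hρ1
    rw [(hasDerivAt_WM ρ S x hρ1 hx1).deriv]
    have h1 : (0:ℝ) < 1 - x := by linarith
    have h2 : (0:ℝ) < 1 - ρ := by linarith
    positivity
  refine ⟨key, ?_⟩
  apply strictMonoOn_of_deriv_pos (convex_Icc _ _)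
  · intro x hx
    have hx1 : x < 1 := lt_of_le_of_lt hx.2 hρ1
    exact (hasDerivAt_WM ρ S x hρ1 hx1).differentiableAt.continuousAt.continuousWithinAt
  · intro x hx
    exact key x (interior_subset hx)
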